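/- (Erdős–Simonovits supersaturation) Let ℱ be a collection of r-graphs each with at least t vertices, let ex(n,ℱ) denote the maximum number of edges of an r-graph on n vertices containing no (not necessarily induced) subgraph isomorphic to a member of ℱ, and suppose γ = lim_{n→∞} ex(n,ℱ)·C(n,r)^{-1} exists. Then for every ε > 0 there exist δ > 0 and n₀ (depending only on ε and ℱ) such that every r-graph G on n > n₀ vertices with more than (γ+ε)·C(n,r) edges contains at least δ·n^t subgraphs each isomorphic to a member of ℱ, i.e., there are at least δ·n^t pairs (U,E') with U a vertex subset of G and E' a subset of the edges of G lying inside U such that (U,E') is isomorphic to a member of ℱ. -/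

import Mathlib

open Finset

/-- The set of all potential edges of an `r`-uniform hypergraph on vertex set `Fin n`:
the `r`-element subsets of the vertex set. -/
def edgeUniv (r n : ℕ) : Finset (Finset (Fin n)) := Finset.powersetCard r Finset.univ

/-- `G` is an `r`-uniform hypergraph on `Fin n`: a set of `r`-element subsets of the vertices. -/
def IsRGraph (r n : ℕ) (G : Finset (Finset (Fin n))) : Prop := G ⊆ edgeUniv r n

/-- The probability that the random `r`-graph `G(n,p)` (each `r`-set being an edge
independently with probability `p`) belongs to the collection `A`. -/
noncomputable def prG (r n : ℕ) (p : ℝ) (A : Set (Finset (Finset (Fin n)))) : ℝ :=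
  ∑ E ∈ (edgeUniv r n).powerset,
    Set.indicator A (fun E => p ^ E.card * (1 - p) ^ ((edgeUniv r n).card - E.card)) E

/-- The `r`-graph `F` on `Fin k` appears as an induced subgraph of `G` (an `r`-graph on
`Fin n`) on the vertex subset `U`. -/
def IsInducedCopyAt (r k n : ℕ) (F : Finset (Finset (Fin k)))
    (G : Finset (Finset (Fin n))) (U : Finset (Fin n)) : Prop :=
  ∃ f : Fin k ↪ Fin n, Finset.univ.map f = U ∧
    ∀ e : Finset (Fin k), e.card = r → (e ∈ F ↔ e.map f ∈ G)

/-- `G` has an induced subgraph on the vertex subset `U` isomorphic to a member of the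
family `Fam` (where `Fam k` is the set of members of the family on `k` vertices). -/
def HasCopyAt (r n : ℕ) (Fam : ∀ k, Set (Finset (Finset (Fin k))))
    (G : Finset (Finset (Fin n))) (U : Finset (Fin n)) : Prop :=
  ∃ k, ∃ H ∈ Fam k, IsInducedCopyAt r k n H G U

/-- `Forb(Fam)ⁿ` : the `r`-graphs on `n` vertices with no induced subgraph isomorphic to a
member of `Fam`. -/
def ForbN (r : ℕ) (Fam : ∀ k, Set (Finset (Finset (Fin k)))) (n : ℕ) :
    Set (Finset (Finset (Fin n))) :=
  {G | IsRGraph r n G ∧ ∀ U, ¬ HasCopyAt r n Fam G U}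

/-- A partial Steiner system with parameters `(r,m,n)`: a collection of `m`-element
subsets of `Fin n` such that every `r`-element subset is contained in at most one member. -/
def IsSteiner (r m n : ℕ) (D : Finset (Finset (Fin n))) : Prop :=
  (∀ B ∈ D, B.card = m) ∧
  ∀ e : Finset (Fin n), e.card = r →
    ∀ B₁ ∈ D, ∀ B₂ ∈ D, e ⊆ B₁ → e ⊆ B₂ → B₁ = B₂

/-- The pair `(U, E')` (a vertex subset of `Fin n` together with a set of edges) is
isomorphic, as an `r`-graph, to the `r`-graph `H` on `Fin k`. -/
def IsIsoPair (k n : ℕ) (H : Finset (Finset (Fin k)))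
    (U : Finset (Fin n)) (E' : Finset (Finset (Fin n))) : Prop :=
  ∃ f : Fin k ↪ Fin n, Finset.univ.map f = U ∧ E' = H.image (fun e => e.map f)

/-- `G` contains a (not necessarily induced) subgraph isomorphic to a member of `Fam`. -/
def ContainsSub (n : ℕ) (Fam : ∀ k, Set (Finset (Finset (Fin k))))
    (G : Finset (Finset (Fin n))) : Prop :=
  ∃ k, ∃ H ∈ Fam k, ∃ (U : Finset (Fin n)) (E' : Finset (Finset (Fin n))),
    E' ⊆ G ∧ IsIsoPair k n H U E'

/-- `ex(n,Fam)`: the maximum number of edges of an `r`-graph on `n` vertices containing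
no (not necessarily induced) subgraph isomorphic to a member of `Fam`. -/
noncomputable def exF (r : ℕ) (Fam : ∀ k, Set (Finset (Finset (Fin k)))) (n : ℕ) : ℕ :=
  sSup {j : ℕ | ∃ G : Finset (Finset (Fin n)),
    IsRGraph r n G ∧ ¬ ContainsSub n Fam G ∧ j = G.card}

open Finset

lemma card_filter_superset {n m : ℕ} (B : Finset (Fin n)) (hbm : B.card ≤ m) :
    ({S ∈ powersetCard m (univ : Finset (Fin n)) | B ⊆ S}).card
      = (n - B.card).choose (m - B.card) := by
  have hcard : ((univ : Finset (Fin n)) \ B).card = n - B.card := by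
    rw [card_sdiff_of_subset (subset_univ B), card_univ, Fintype.card_fin]
  rw [← hcard, ← card_powersetCard (m - B.card) ((univ : Finset (Fin n)) \ B)]
  apply card_bij (fun S _ => S \ B)
  · intro S hS
    rw [mem_filter, mem_powersetCard] at hS
    obtain ⟨⟨-, hScard⟩, hBS⟩ := hS
    rw [mem_powersetCard]
    exact ⟨sdiff_subset_sdiff (subset_univ _) Subset.rfl,
      by rw [card_sdiff_of_subset hBS, hScard]⟩
  · intro S₁ h₁ S₂ h₂ h
    rw [mem_filter] at h₁ h₂
    rw [← sdiff_union_of_subset h₁.2, ← sdiff_union_of_subset h₂.2, h]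
  · intro T hT
    rw [mem_powersetCard] at hT
    obtain ⟨hTsub, hTcard⟩ := hT
    have hdisj : Disjoint T B := disjoint_of_subset_left hTsub sdiff_disjoint
    refine ⟨T ∪ B, ?_, ?_⟩
    · rw [mem_filter, mem_powersetCard]
      refine ⟨⟨subset_univ _, ?_⟩, subset_union_right⟩
      rw [card_union_of_disjoint hdisj, hTcard]
      omega
    · rw [union_sdiff_right, sdiff_eq_self_of_disjoint hdisj]

lemma choose_sub_le_choose_sub {n m : ℕ} (hmn : m ≤ n) {i j : ℕ} (hij : i ≤ j)
    (hjm : j ≤ m) : (n - j).choose (m - j) ≤ (n - i).choose (m - i) := by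
  induction j, hij using Nat.le_induction with
  | base => exact le_rfl
  | succ j hij ih =>
    refine le_trans ?_ (ih (by omega))
    have h1 : n - j = (n - (j + 1)) + 1 := by omega
    have h2 : m - j = (m - (j + 1)) + 1 := by omega
    rw [h1, h2, Nat.choose_succ_succ]
    exact Nat.le_add_right _ _

lemma le_exF {r m : ℕ} {Fam : ∀ k, Set (Finset (Finset (Fin k)))}
    {G : Finset (Finset (Fin m))} (hG : IsRGraph r m G)
    (hns : ¬ ContainsSub m Fam G) : G.card ≤ exF r Fam m := by
  apply le_csSup
  · refine ⟨(edgeUniv r m).card, fun j hj => ?_⟩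
    obtain ⟨G', hG', -, rfl⟩ := hj
    exact card_le_card hG'
  · exact ⟨G, hG, hns, rfl⟩
lemma copy_of_dense {r t n m : ℕ} {Fam : ∀ k, Set (Finset (Finset (Fin k)))}
    (hFam : ∀ k, ∀ H ∈ Fam k, IsRGraph r k H ∧ t ≤ k)
    {G : Finset (Finset (Fin n))} (hG : IsRGraph r n G)
    {S : Finset (Fin n)} (hS : S.card = m)
    (hd : exF r Fam m < ({e ∈ G | e ⊆ S}).card) :
    ∃ q : Finset (Fin n) × Finset (Finset (Fin n)),
      (q.2 ⊆ G ∧ ∃ k, ∃ H ∈ Fam k, IsIsoPair k n H q.1 q.2) ∧ q.1 ⊆ S ∧ t ≤ q.1.card := by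
  classical
  set g : Fin m ↪ Fin n := (S.orderEmbOfFin hS).toEmbedding with hg
  have hgS : (univ : Finset (Fin m)).map g = S := by
    ext x
    simp only [mem_map, mem_univ, true_and]
    constructor
    · rintro ⟨i, rfl⟩; exact S.orderEmbOfFin_mem hS i
    · intro hx
      have := S.range_orderEmbOfFin hS
      have : x ∈ Set.range (S.orderEmbOfFin hS) := by rw [this]; exact hx
      obtain ⟨i, hi⟩ := this
      exact ⟨i, hi⟩
  set GS : Finset (Finset (Fin m)) := {e ∈ (univ : Finset (Finset (Fin m))) | e.map g ∈ G}
    with hGS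
  have hGSr : IsRGraph r m GS := by
    intro e he
    rw [hGS, mem_filter] at he
    have := hG he.2
    rw [edgeUniv, mem_powersetCard] at this ⊢
    refine ⟨subset_univ _, ?_⟩
    have := this.2
    rwa [Finset.card_map] at this
  have hcard : ({e ∈ G | e ⊆ S}).card ≤ GS.card := by
    refine le_trans (card_le_card ?_) (card_image_le (f := fun e => e.map g))
    intro e' he'
    rw [mem_filter] at he'
    rw [← hgS] at he'
    obtain ⟨u, -, rfl⟩ := Finset.subset_map_iff.mp he'.2
    exact mem_image_of_mem _ (by rw [hGS, mem_filter]; exact ⟨mem_univ _, he'.1⟩)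
  have hsub : ContainsSub m Fam GS := by
    by_contra hns
    exact absurd (le_exF hGSr hns) (by omega)
  obtain ⟨k, H, hH, U', E'', hE'', f, hf1, hf2⟩ := hsub
  refine ⟨(U'.map g, E''.image (fun e => e.map g)), ⟨?_, k, H, hH, f.trans g, ?_, ?_⟩, ?_, ?_⟩
  · intro e' he'
    obtain ⟨e, he, rfl⟩ := mem_image.mp he'
    have := hE'' he
    rw [hGS, mem_filter] at this
    exact this.2
  · rw [← Finset.map_map, hf1]
  · rw [hf2, image_image]
    apply Finset.image_congr
    intro e _
    simp [Finset.map_map]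
  · rw [← hgS]
    exact map_subset_map.mpr (subset_univ _)
  · have : (U'.map g).card = k := by
      rw [Finset.card_map, ← hf1, Finset.card_map, card_univ, Fintype.card_fin]
    rw [this]
    exact (hFam k H hH).2

/-- **Erdős–Simonovits supersaturation.** If each member of `Fam` has at least `t`
vertices and `γ = lim ex(n,Fam)/C(n,r)` exists, then for every `ε > 0` there are
`δ > 0` and `n₀` such that every `r`-graph on `n > n₀` vertices with more than
`(γ+ε) C(n,r)` edges contains at least `δ n^t` subgraphs (pairs `(U,E')`) isomorphic
to members of `Fam`. -/
theorem stmt_12 (r t : ℕ) (Fam : ∀ k, Set (Finset (Finset (Fin k))))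
    (hFam : ∀ k, ∀ H ∈ Fam k, IsRGraph r k H ∧ t ≤ k)
    (γ : ℝ)
    (hγ : Filter.Tendsto (fun n => (exF r Fam n : ℝ) / (n.choose r : ℝ))
      Filter.atTop (nhds γ))
    (ε : ℝ) (hε : 0 < ε) :
    ∃ (δ : ℝ) (n₀ : ℕ), 0 < δ ∧ ∀ n, n₀ < n →
      ∀ G : Finset (Finset (Fin n)), IsRGraph r n G →
      (γ + ε) * (n.choose r : ℝ) < (G.card : ℝ) →
      δ * (n : ℝ) ^ t ≤
        (Set.ncard {q : Finset (Fin n) × Finset (Finset (Fin n)) |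
          q.2 ⊆ G ∧ ∃ k, ∃ H ∈ Fam k, IsIsoPair k n H q.1 q.2} : ℝ) := by
  classical
  obtain ⟨M, hM⟩ := Metric.tendsto_atTop.mp hγ (ε/2) (by linarith)
  set m := max (max M r) t with hmdef
  have hrm : r ≤ m := le_trans (le_max_right M r) (le_max_left _ _)
  have htm : t ≤ m := le_max_right _ _
  have hMm : M ≤ m := le_trans (le_max_left M r) (le_max_left _ _)
  have hcmr : (0:ℝ) < (m.choose r : ℝ) := by exact_mod_cast Nat.choose_pos hrm
  have hcmt : (0:ℝ) < (m.choose t : ℝ) := by exact_mod_cast Nat.choose_pos htm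
  have hftpos : (0:ℝ) < (t.factorial : ℝ) := by exact_mod_cast t.factorial_pos
  have h2tpos : (0:ℝ) < (2:ℝ)^t := by positivity
  have hex : (exF r Fam m : ℝ) ≤ (γ + ε/2) * (m.choose r : ℝ) := by
    have h := hM m hMm
    rw [Real.dist_eq, abs_lt] at h
    have h2 := h.2
    have h3 : (exF r Fam m : ℝ) / (m.choose r : ℝ) < γ + ε/2 := by linarith
    have h4 := (div_lt_iff₀ hcmr).mp h3
    linarith
  refine ⟨ε / (2 * (m.choose t) * 2^t * (t.factorial)), max m (2*t), ?_, ?_⟩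
  · exact div_pos hε (by positivity)
  intro n hn G hGr hGcard
  have hmn : m ≤ n := le_of_lt (lt_of_le_of_lt (le_max_left _ _) hn)
  have h2tn : 2 * t ≤ n := le_of_lt (lt_of_le_of_lt (le_max_right _ _) hn)
  set pc := powersetCard m (univ : Finset (Fin n)) with hpc
  have hpccard : pc.card = n.choose m := by
    rw [hpc, card_powersetCard, card_univ, Fintype.card_fin]
  -- Step B : double counting
  have hB : ∀ e ∈ G, ({S ∈ pc | e ⊆ S}).card = (n-r).choose (m-r) := by
    intro e he
    have hcard : e.card = r := by
      have := hGr he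
      rw [edgeUniv, mem_powersetCard] at this
      exact this.2
    have h := card_filter_superset e (le_trans (le_of_eq hcard) hrm)
    rwa [hcard] at h
  have hsum : G.card * ((n-r).choose (m-r)) = ∑ S ∈ pc, ({e ∈ G | e ⊆ S}).card := by
    symm
    calc ∑ S ∈ pc, ({e ∈ G | e ⊆ S}).card
        = ∑ S ∈ pc, ∑ e ∈ G, if e ⊆ S then 1 else 0 := by
          exact sum_congr rfl fun S _ => card_filter _ _
      _ = ∑ e ∈ G, ∑ S ∈ pc, if e ⊆ S then 1 else 0 := sum_comm
      _ = ∑ e ∈ G, (n-r).choose (m-r) := by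
          refine sum_congr rfl fun e he => ?_
          rw [← card_filter]
          exact hB e he
      _ = G.card * ((n-r).choose (m-r)) := by rw [sum_const, smul_eq_mul]
  -- Step C : many dense m-sets
  set A := {S ∈ pc | exF r Fam m < ({e ∈ G | e ⊆ S}).card} with hA
  have hsplit : ∑ S ∈ pc, ({e ∈ G | e ⊆ S}).card
      ≤ A.card * (m.choose r) + (n.choose m) * exF r Fam m := by
    rw [← sum_filter_add_sum_filter_not pc
      (fun S => exF r Fam m < ({e ∈ G | e ⊆ S}).card)]
    refine add_le_add ?_ ?_
    · refine le_trans (sum_le_card_nsmul _ _ (m.choose r) ?_) (le_of_eq (by rw [smul_eq_mul]))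
      intro S hS
      have hSpc : S ∈ pc := (mem_filter.mp hS).1
      have hScard : S.card = m := (mem_powersetCard.mp hSpc).2
      calc ({e ∈ G | e ⊆ S}).card ≤ (powersetCard r S).card := by
            apply card_le_card
            intro e he
            rw [mem_filter] at he
            have : e.card = r := by
              have := hGr he.1
              rw [edgeUniv, mem_powersetCard] at this
              exact this.2
            rw [mem_powersetCard]
            exact ⟨he.2, this⟩
        _ = m.choose r := by rw [card_powersetCard, hScard]
    · refine le_trans (sum_le_card_nsmul _ _ (exF r Fam m) ?_) ?_
      · intro S hS
        rw [mem_filter, not_lt] at hS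
        exact hS.2
      · rw [smul_eq_mul]
        have h1 : ({S ∈ pc | ¬ exF r Fam m < ({e ∈ G | e ⊆ S}).card}).card ≤ n.choose m := by
          rw [← hpccard]
          exact card_le_card (filter_subset _ _)
        exact Nat.mul_le_mul_right _ h1
  have hArc : (ε/2) * (n.choose m : ℝ) < (A.card : ℝ) := by
    have hNat : G.card * ((n-r).choose (m-r))
        ≤ A.card * (m.choose r) + (n.choose m) * exF r Fam m := hsum ▸ hsplit
    have hid : (n.choose m) * (m.choose r) = (n.choose r) * ((n-r).choose (m-r)) :=
      Nat.choose_mul hrm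
    have hpos : (0:ℝ) < ((n-r).choose (m-r) : ℝ) := by
      exact_mod_cast Nat.choose_pos (by omega)
    have hR : ((G.card : ℝ)) * ((n-r).choose (m-r))
        ≤ (A.card : ℝ) * (m.choose r) + (n.choose m) * (exF r Fam m) := by
      exact_mod_cast hNat
    have hidR : ((n.choose m : ℝ)) * (m.choose r)
        = (n.choose r : ℝ) * ((n-r).choose (m-r)) := by exact_mod_cast hid
    have k1 : (γ+ε) * ((n.choose m:ℝ) * (m.choose r))
        < (A.card:ℝ) * (m.choose r) + (n.choose m) * (exF r Fam m) := by
      rw [hidR]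
      calc (γ+ε) * ((n.choose r : ℝ) * ((n-r).choose (m-r)))
          = ((γ+ε) * (n.choose r : ℝ)) * ((n-r).choose (m-r)) := by ring
        _ < (G.card : ℝ) * ((n-r).choose (m-r)) :=
            mul_lt_mul_of_pos_right hGcard hpos
        _ ≤ _ := hR
    have k2 : ((n.choose m:ℝ)) * (exF r Fam m)
        ≤ (γ+ε/2) * ((n.choose m:ℝ) * (m.choose r)) := by
      calc ((n.choose m:ℝ)) * (exF r Fam m)
          ≤ (n.choose m:ℝ) * ((γ + ε/2) * (m.choose r)) :=
            mul_le_mul_of_nonneg_left hex (Nat.cast_nonneg _)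
        _ = (γ+ε/2) * ((n.choose m:ℝ) * (m.choose r)) := by ring
    have k3 : (γ+ε) * ((n.choose m:ℝ) * (m.choose r))
        = (γ+ε/2) * ((n.choose m:ℝ) * (m.choose r))
          + (ε/2) * ((n.choose m:ℝ) * (m.choose r)) := by ring
    have k4 : (ε/2) * ((n.choose m:ℝ)) * (m.choose r) < (A.card:ℝ) * (m.choose r) := by
      nlinarith
    exact lt_of_mul_lt_mul_right (by linarith) (le_of_lt hcmr)
  -- Step D : from dense m-sets to copies
  set Q : Finset (Fin n) × Finset (Finset (Fin n)) → Prop :=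
    fun q => (q.2 ⊆ G ∧ ∃ k, ∃ H ∈ Fam k, IsIsoPair k n H q.1 q.2) with hQ
  have hchoose : ∀ S ∈ A, ∃ q, Q q ∧ q.1 ⊆ S ∧ t ≤ q.1.card := by
    intro S hS
    rw [hA, mem_filter] at hS
    have hScard : S.card = m := (mem_powersetCard.mp hS.1).2
    exact copy_of_dense hFam hGr hScard hS.2
  set c : Finset (Fin n) → Finset (Fin n) × Finset (Finset (Fin n)) :=
    fun S => if h : ∃ q, Q q ∧ q.1 ⊆ S ∧ t ≤ q.1.card then h.choose else (∅, ∅) with hcdef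
  have hc : ∀ S ∈ A, Q (c S) ∧ (c S).1 ⊆ S ∧ t ≤ (c S).1.card := by
    intro S hS
    have h := hchoose S hS
    rw [hcdef]
    simp only [dif_pos h]
    exact h.choose_spec
  have hfiber : A.card ≤ (n-t).choose (m-t) * (A.image c).card := by
    apply card_le_mul_card_image
    intro q hq
    obtain ⟨S₀, hS₀, hcS₀⟩ := mem_image.mp hq
    have hq1 : q.1 ⊆ S₀ := by rw [← hcS₀]; exact (hc S₀ hS₀).2.1
    have htq : t ≤ q.1.card := by rw [← hcS₀]; exact (hc S₀ hS₀).2.2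
    have hS₀card : S₀.card = m :=
      (mem_powersetCard.mp (mem_filter.mp hS₀).1).2
    have hqm : q.1.card ≤ m := le_trans (card_le_card hq1) (le_of_eq hS₀card)
    calc ({S ∈ A | c S = q}).card ≤ ({S ∈ pc | q.1 ⊆ S}).card := by
          apply card_le_card
          intro S hS
          rw [mem_filter] at hS ⊢
          refine ⟨(mem_filter.mp hS.1).1, ?_⟩
          rw [← hS.2]
          exact (hc S hS.1).2.1
      _ = (n - q.1.card).choose (m - q.1.card) := card_filter_superset _ hqm
      _ ≤ (n-t).choose (m-t) := choose_sub_le_choose_sub hmn htq hqm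
  set P : Set (Finset (Fin n) × Finset (Finset (Fin n))) :=
    {q | q.2 ⊆ G ∧ ∃ k, ∃ H ∈ Fam k, IsIsoPair k n H q.1 q.2} with hP
  have hPfin : P.Finite := Set.toFinite P
  have hncard : ((A.image c).card : ℝ) ≤ (P.ncard : ℝ) := by
    have himg : A.image c ⊆ hPfin.toFinset := by
      intro q hq
      obtain ⟨S₀, hS₀, hcS₀⟩ := mem_image.mp hq
      rw [Set.Finite.mem_toFinset]
      rw [← hcS₀]
      exact (hc S₀ hS₀).1
    rw [Set.ncard_eq_toFinset_card P hPfin]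
    exact_mod_cast card_le_card himg
  -- Final numeric step
  have hD : (0:ℝ) < ((n-t).choose (m-t) : ℝ) := by
    exact_mod_cast Nat.choose_pos (by omega)
  have hchain : (ε/2) * (n.choose m : ℝ) < (P.ncard : ℝ) * ((n-t).choose (m-t)) := by
    calc (ε/2) * (n.choose m : ℝ) < (A.card : ℝ) := hArc
      _ ≤ ((n-t).choose (m-t) : ℝ) * ((A.image c).card : ℝ) := by exact_mod_cast hfiber
      _ ≤ ((n-t).choose (m-t) : ℝ) * (P.ncard : ℝ) :=
          mul_le_mul_of_nonneg_left hncard (Nat.cast_nonneg _)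
      _ = (P.ncard : ℝ) * ((n-t).choose (m-t)) := mul_comm _ _
  have hid2 : ((n.choose m : ℝ)) * (m.choose t)
      = (n.choose t : ℝ) * ((n-t).choose (m-t)) := by
    exact_mod_cast Nat.choose_mul htm
  have hfinal : (ε/2) * ((n.choose t : ℝ) / (m.choose t)) ≤ (P.ncard : ℝ) := by
    have hCnm : (n.choose m : ℝ) = (n.choose t : ℝ) * ((n-t).choose (m-t)) / (m.choose t) := by
      field_simp
      linarith [hid2]
    have h5 : ((ε/2) * ((n.choose t : ℝ) / (m.choose t))) * ((n-t).choose (m-t))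
        < (P.ncard : ℝ) * ((n-t).choose (m-t)) := by
      calc ((ε/2) * ((n.choose t : ℝ) / (m.choose t))) * ((n-t).choose (m-t))
          = (ε/2) * ((n.choose t : ℝ) * ((n-t).choose (m-t)) / (m.choose t)) := by ring
        _ = (ε/2) * (n.choose m : ℝ) := by rw [← hCnm]
        _ < _ := hchain
    exact le_of_lt (lt_of_mul_lt_mul_right h5 (le_of_lt hD))
  have hNt : ((n:ℝ))^t ≤ 2^t * (t.factorial : ℝ) * (n.choose t : ℝ) := by
    have h1 : n^t ≤ 2^t * (t.factorial) * (n.choose t) := by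
      have hd : (n + 1 - t)^t ≤ n.descFactorial t := Nat.pow_sub_le_descFactorial n t
      have hdf : n.descFactorial t = t.factorial * n.choose t :=
        Nat.descFactorial_eq_factorial_mul_choose n t
      have h2 : n ≤ 2 * (n + 1 - t) := by omega
      calc n^t ≤ (2*(n+1-t))^t := Nat.pow_le_pow_left h2 t
        _ = 2^t * (n+1-t)^t := Nat.mul_pow 2 _ t
        _ ≤ 2^t * (t.factorial * n.choose t) := Nat.mul_le_mul_left _ (by rw [← hdf]; exact hd)
        _ = 2^t * t.factorial * n.choose t := (Nat.mul_assoc _ _ _).symm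
    exact_mod_cast h1
  have hδnn : (0:ℝ) ≤ ε / (2 * (m.choose t) * 2^t * (t.factorial)) :=
    le_of_lt (div_pos hε (by positivity))
  calc ε / (2 * (m.choose t : ℝ) * 2^t * (t.factorial)) * (n:ℝ)^t
      ≤ ε / (2 * (m.choose t : ℝ) * 2^t * (t.factorial))
        * (2^t * (t.factorial : ℝ) * (n.choose t : ℝ)) := by
        exact mul_le_mul_of_nonneg_left hNt hδnn
    _ = (ε/2) * ((n.choose t : ℝ) / (m.choose t)) := by
        field_simp
    _ ≤ (P.ncard : ℝ) := hfinal
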